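/- Let β > 0, let J be a real random variable with symmetric distribution, and let W be a random variable with values in [−1,1], independent of J. Define J̃ := (1/β)·artanh(tanh(βJ)·W). Then J̃ is a well-defined real random variable with |J̃| ≤ |J| almost surely, J̃ has symmetric distribution, and for every integer n ≥ 1, E[tanh^{2n}(βJ̃)] = E[tanh^{2n}(βJ)]·E[W^{2n}]. -/

import Mathlib

open MeasureTheory ProbabilityTheory

/-- The inverse hyperbolic tangent on `(−1,1)`: `artanh x = (1/2)·log((1+x)/(1−x))`. -/
noncomputable def artanh (x : ℝ) : ℝ := Real.log ((1 + x) / (1 - x)) / 2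

lemma tanh_eq_exp (x : ℝ) :
    Real.tanh x = (Real.exp (2 * x) - 1) / (Real.exp (2 * x) + 1) := by
  rw [Real.tanh_eq_sinh_div_cosh, Real.sinh_eq, Real.cosh_eq, Real.exp_neg]
  have h1 : Real.exp (2 * x) = Real.exp x * Real.exp x := by
    rw [two_mul, Real.exp_add]
  have h2 : Real.exp x ≠ 0 := Real.exp_ne_zero x
  have h3 : Real.exp (2 * x) + 1 ≠ 0 := by positivity
  rw [h1] at *
  field_simp

lemma tanh_mem_Ioo (x : ℝ) : Real.tanh x ∈ Set.Ioo (-1 : ℝ) 1 := by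
  rw [tanh_eq_exp]
  have h : 0 < Real.exp (2 * x) := Real.exp_pos _
  constructor
  · rw [lt_div_iff₀ (by linarith)]; linarith
  · rw [div_lt_one (by linarith)]; linarith

lemma abs_tanh_lt_one (x : ℝ) : |Real.tanh x| < 1 := by
  have h := tanh_mem_Ioo x
  rw [abs_lt]; exact ⟨h.1, h.2⟩

lemma artanh_tanh (y : ℝ) : artanh (Real.tanh y) = y := by
  have h : 0 < Real.exp (2 * y) := Real.exp_pos _
  rw [tanh_eq_exp, artanh]
  have h1 : Real.exp (2 * y) + 1 ≠ 0 := by positivity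
  have key : (1 + (Real.exp (2 * y) - 1) / (Real.exp (2 * y) + 1)) /
      (1 - (Real.exp (2 * y) - 1) / (Real.exp (2 * y) + 1)) = Real.exp (2 * y) := by
    field_simp
    ring
  rw [key, Real.log_exp]
  ring

lemma tanh_artanh {x : ℝ} (h : |x| < 1) : Real.tanh (artanh x) = x := by
  rw [abs_lt] at h
  have h1 : (0:ℝ) < 1 - x := by linarith
  have h2 : (0:ℝ) < 1 + x := by linarith
  have hy : 0 < (1 + x) / (1 - x) := by positivity
  rw [tanh_eq_exp, artanh]
  have : 2 * (Real.log ((1 + x) / (1 - x)) / 2) = Real.log ((1 + x) / (1 - x)) := by ring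
  rw [this, Real.exp_log hy]
  rw [div_eq_iff]
  · field_simp
    ring
  · have : 0 < (1 + x) / (1 - x) + 1 := by positivity
    linarith

lemma artanh_neg {x : ℝ} (h : |x| < 1) : artanh (-x) = -artanh x := by
  rw [abs_lt] at h
  have h1 : (0:ℝ) < 1 - x := by linarith
  have h2 : (0:ℝ) < 1 + x := by linarith
  unfold artanh
  have key : (1 + -x) / (1 - -x) = ((1 + x) / (1 - x))⁻¹ := by
    rw [inv_div]; ring_nf
  rw [key, Real.log_inv]
  ring

lemma artanh_nonneg {x : ℝ} (h0 : 0 ≤ x) (h1 : x < 1) : 0 ≤ artanh x := by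
  unfold artanh
  have : (1:ℝ) ≤ (1 + x) / (1 - x) := by
    rw [le_div_iff₀ (by linarith)]; linarith
  have := Real.log_nonneg this
  linarith

lemma artanh_mono {a b : ℝ} (ha : 0 ≤ a) (hab : a ≤ b) (hb : b < 1) :
    artanh a ≤ artanh b := by
  unfold artanh
  have h1 : (0:ℝ) < 1 - b := by linarith
  have h2 : (0:ℝ) < 1 - a := by linarith
  have hpos : 0 < (1 + a) / (1 - a) := by positivity
  have : (1 + a) / (1 - a) ≤ (1 + b) / (1 - b) := by
    rw [div_le_div_iff₀ h2 h1]; nlinarith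
  have := Real.log_le_log hpos this
  linarith

lemma abs_artanh {x : ℝ} (h : |x| < 1) : |artanh x| = artanh |x| := by
  rcases le_or_gt 0 x with hx | hx
  · rw [abs_of_nonneg hx, abs_of_nonneg (artanh_nonneg hx (lt_of_abs_lt h))]
  · have h' : |(-x)| < 1 := by rwa [abs_neg]
    have h0 : 0 ≤ -x := by linarith
    have hx1 : -x < 1 := by rw [← abs_neg] at h; exact lt_of_abs_lt h
    have h2 : 0 ≤ artanh (-x) := artanh_nonneg h0 hx1
    rw [artanh_neg h] at h2
    rw [abs_of_neg hx, artanh_neg h, abs_of_nonpos (by linarith)]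

lemma abs_artanh_le {t w : ℝ} (ht : |t| < 1) (hw : |w| ≤ 1) :
    |artanh (t * w)| ≤ |artanh t| := by
  have htw : |t * w| < 1 := by
    rw [abs_mul]
    calc |t| * |w| ≤ |t| * 1 := by
          exact mul_le_mul_of_nonneg_left hw (abs_nonneg t)
      _ = |t| := mul_one _
      _ < 1 := ht
  rw [abs_artanh htw, abs_artanh ht]
  refine artanh_mono (abs_nonneg _) ?_ ht
  rw [abs_mul]
  calc |t| * |w| ≤ |t| * 1 := mul_le_mul_of_nonneg_left hw (abs_nonneg t)
    _ = |t| := mul_one _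

lemma measurable_artanh : Measurable artanh := by
  unfold artanh
  exact (Real.measurable_log.comp ((measurable_const.add measurable_id).div
    (measurable_const.sub measurable_id))).div_const 2

lemma measurable_tanh : Measurable Real.tanh := by
  have h : Real.tanh = fun x : ℝ => Real.sinh x / Real.cosh x := by
    funext y; exact Real.tanh_eq_sinh_div_cosh y
  rw [h]
  exact Real.continuous_sinh.measurable.div Real.continuous_cosh.measurable

/-- For `β > 0`, `J` symmetric, `W` with values in `[−1,1]` independent of
`J`, the dilution `J̃ := (1/β)·artanh(tanh(βJ)·W)` is a well-defined (measurable) real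
random variable with `|J̃| ≤ |J|` a.s., `J̃` is symmetric, and for every `n ≥ 1`,
`E[tanh^{2n}(βJ̃)] = E[tanh^{2n}(βJ)]·E[W^{2n}]`. -/
theorem diluted_coupling (β : ℝ) (hβ : 0 < β)
    (Ω : Type) [MeasureSpace Ω] [IsProbabilityMeasure (ℙ : Measure Ω)]
    (J W : Ω → ℝ) (hJmeas : Measurable J) (hWmeas : Measurable W)
    (hJsymm : Measure.map J ℙ = Measure.map (fun ω => -J ω) ℙ)
    (hW : ∀ ω, W ω ∈ Set.Icc (-1 : ℝ) 1)
    (hindep : IndepFun J W ℙ) :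
    Measurable (fun ω => (1 / β) * artanh (Real.tanh (β * J ω) * W ω)) ∧
    (∀ᵐ ω ∂ℙ, |(1 / β) * artanh (Real.tanh (β * J ω) * W ω)| ≤ |J ω|) ∧
    Measure.map (fun ω => (1 / β) * artanh (Real.tanh (β * J ω) * W ω)) ℙ
      = Measure.map (fun ω => -((1 / β) * artanh (Real.tanh (β * J ω) * W ω))) ℙ ∧
    ∀ n : ℕ, 1 ≤ n →
      ∫ ω, Real.tanh (β * ((1 / β) * artanh (Real.tanh (β * J ω) * W ω))) ^ (2 * n) ∂ℙ
        = (∫ ω, Real.tanh (β * J ω) ^ (2 * n) ∂ℙ) * ∫ ω, (W ω) ^ (2 * n) ∂ℙ := by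
  have hβne : β ≠ 0 := ne_of_gt hβ
  have hWabs : ∀ ω, |W ω| ≤ 1 := fun ω => abs_le.mpr ⟨(hW ω).1, (hW ω).2⟩
  -- the two-variable function
  have hfmeas : Measurable (fun p : ℝ × ℝ => (1 / β) * artanh (Real.tanh (β * p.1) * p.2)) :=
    measurable_const.mul (measurable_artanh.comp
      ((measurable_tanh.comp (measurable_const.mul measurable_fst)).mul measurable_snd))
  have hmeas : Measurable (fun ω => (1 / β) * artanh (Real.tanh (β * J ω) * W ω)) :=
    measurable_const.mul (measurable_artanh.comp
      ((measurable_tanh.comp (measurable_const.mul hJmeas)).mul hWmeas))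
  refine ⟨hmeas, ?_, ?_, ?_⟩
  ·
    filter_upwards with ω
    have ht : |Real.tanh (β * J ω)| < 1 := abs_tanh_lt_one _
    have h1 : |artanh (Real.tanh (β * J ω) * W ω)| ≤ |artanh (Real.tanh (β * J ω))| :=
      abs_artanh_le ht (hWabs ω)
    rw [artanh_tanh] at h1
    rw [abs_mul]
    rw [abs_mul] at h1
    have : |1 / β| = 1 / β := abs_of_pos (by positivity)
    rw [this]
    calc 1 / β * |artanh (Real.tanh (β * J ω) * W ω)| ≤ 1 / β * (|β| * |J ω|) := by
          apply mul_le_mul_of_nonneg_left h1 (by positivity)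
      _ = |J ω| := by rw [abs_of_pos hβ]; field_simp
  · -- symmetry
    have hneg : (fun ω => -((1 / β) * artanh (Real.tanh (β * J ω) * W ω)))
        = (fun p : ℝ × ℝ => (1 / β) * artanh (Real.tanh (β * p.1) * p.2))
          ∘ (fun ω => (-J ω, W ω)) := by
      funext ω
      have htw : |Real.tanh (β * J ω) * W ω| < 1 := by
        rw [abs_mul]
        calc |Real.tanh (β * J ω)| * |W ω| ≤ |Real.tanh (β * J ω)| * 1 :=
              mul_le_mul_of_nonneg_left (hWabs ω) (abs_nonneg _)
          _ = _ := mul_one _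
          _ < 1 := abs_tanh_lt_one _
      simp only [Function.comp_apply]
      rw [mul_neg, Real.tanh_neg, neg_mul, artanh_neg htw]
      ring
    have hpos : (fun ω => (1 / β) * artanh (Real.tanh (β * J ω) * W ω))
        = (fun p : ℝ × ℝ => (1 / β) * artanh (Real.tanh (β * p.1) * p.2))
          ∘ (fun ω => (J ω, W ω)) := rfl
    have hindep' : IndepFun (fun ω => -J ω) W ℙ := by
      have := hindep.comp (measurable_neg) (measurable_id)
      exact this
    have hpair1 : Measure.map (fun ω => (J ω, W ω)) ℙ
        = (Measure.map J ℙ).prod (Measure.map W ℙ) :=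
      (indepFun_iff_map_prod_eq_prod_map_map hJmeas.aemeasurable hWmeas.aemeasurable).mp hindep
    have hpair2 : Measure.map (fun ω => (-J ω, W ω)) ℙ
        = (Measure.map (fun ω => -J ω) ℙ).prod (Measure.map W ℙ) :=
      (indepFun_iff_map_prod_eq_prod_map_map hJmeas.neg.aemeasurable
        hWmeas.aemeasurable).mp hindep'
    have hpaireq : Measure.map (fun ω => (J ω, W ω)) ℙ
        = Measure.map (fun ω => (-J ω, W ω)) ℙ := by
      rw [hpair1, hpair2, hJsymm]
    rw [hpos, hneg, ← Measure.map_map hfmeas (hJmeas.prodMk hWmeas),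
      ← Measure.map_map (f := fun ω => (-J ω, W ω)) hfmeas (hJmeas.neg.prodMk hWmeas), hpaireq]
  · -- moments
    intro n hn
    have hkey : ∀ ω, Real.tanh (β * ((1 / β) * artanh (Real.tanh (β * J ω) * W ω)))
        = Real.tanh (β * J ω) * W ω := by
      intro ω
      have htw : |Real.tanh (β * J ω) * W ω| < 1 := by
        rw [abs_mul]
        calc |Real.tanh (β * J ω)| * |W ω| ≤ |Real.tanh (β * J ω)| * 1 :=
              mul_le_mul_of_nonneg_left (hWabs ω) (abs_nonneg _)
          _ = _ := mul_one _
          _ < 1 := abs_tanh_lt_one _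
      have : β * ((1 / β) * artanh (Real.tanh (β * J ω) * W ω))
          = artanh (Real.tanh (β * J ω) * W ω) := by field_simp
      rw [this, tanh_artanh htw]
    have heq : (fun ω => Real.tanh (β * ((1 / β) * artanh (Real.tanh (β * J ω) * W ω))) ^ (2 * n))
        = fun ω => (Real.tanh (β * J ω)) ^ (2 * n) * (W ω) ^ (2 * n) := by
      funext ω
      rw [hkey ω, mul_pow]
    rw [show (∫ ω, Real.tanh (β * ((1 / β) * artanh (Real.tanh (β * J ω) * W ω))) ^ (2 * n) ∂ℙ)
        = ∫ ω, (Real.tanh (β * J ω)) ^ (2 * n) * (W ω) ^ (2 * n) ∂ℙ from by rw [heq]]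
    have hindep2 : IndepFun (fun ω => (Real.tanh (β * J ω)) ^ (2 * n))
        (fun ω => (W ω) ^ (2 * n)) ℙ :=
      hindep.comp ((measurable_tanh.comp (measurable_const.mul measurable_id)).pow_const (2*n))
        (measurable_id.pow_const (2*n))
    exact hindep2.integral_mul_eq_mul_integral
      (((measurable_tanh.comp (measurable_const.mul hJmeas)).pow_const (2*n)).aestronglyMeasurable)
      ((hWmeas.pow_const (2*n)).aestronglyMeasurable)
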